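/- Let A, B, C be real random variables. Suppose sup_{z∈ℝ} |P(A ≤ z) − Φ(z)| ≤ ε_A and P(|B| ≤ δ_B, |C| ≤ δ_C) ≥ 1 − ε_{BC} for some ε_A, ε_{BC}, δ_B, δ_C ∈ [0,1). Then sup_{z∈ℝ} |P((A+B)/(1+C) ≤ z) − Φ(z)| ≤ δ_B + δ_C/(1−δ_C) + ε_A + ε_{BC}. -/

import Mathlib

open MeasureTheory ProbabilityTheory

/-- The standard normal cumulative distribution function. -/
noncomputable def stdNormalCDF (z : ℝ) : ℝ := ((gaussianReal 0 1) (Set.Iic z)).toReal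


lemma pdf_eq (x : ℝ) :
    gaussianPDFReal 0 1 x = (Real.sqrt (2 * Real.pi))⁻¹ * Real.exp (-(x ^ 2 / 2)) := by
  simp only [gaussianPDFReal, NNReal.coe_one, mul_one, sub_zero, one_div, neg_div]

lemma sqrt_two_pi_ge_one : (1 : ℝ) ≤ Real.sqrt (2 * Real.pi) := by
  rw [show (1:ℝ) = Real.sqrt 1 by simp]
  exact Real.sqrt_le_sqrt (by nlinarith [Real.pi_gt_three])

lemma pdf_nonneg (x : ℝ) : 0 ≤ gaussianPDFReal 0 1 x := gaussianPDFReal_nonneg 0 1 x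

lemma pdf_le_one (x : ℝ) : gaussianPDFReal 0 1 x ≤ 1 := by
  rw [pdf_eq]
  have h1 : Real.exp (-(x ^ 2 / 2)) ≤ 1 := Real.exp_le_one_iff.mpr (by nlinarith [sq_nonneg x])
  have h2 := sqrt_two_pi_ge_one
  have h3 : (Real.sqrt (2 * Real.pi))⁻¹ ≤ 1 := by
    rw [inv_le_one_iff₀]; right; exact h2
  nlinarith [Real.exp_pos (-(x ^ 2 / 2))]

lemma mul_pdf_le_one {x : ℝ} (hx : 0 ≤ x) : x * gaussianPDFReal 0 1 x ≤ 1 := by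
  rw [pdf_eq]
  have h2 := sqrt_two_pi_ge_one
  have hkey : x * Real.exp (-(x ^ 2 / 2)) ≤ 1 := by
    have h := Real.add_one_le_exp (x ^ 2 / 2)
    have hx2 : x ≤ Real.exp (x ^ 2 / 2) := by nlinarith [sq_nonneg (x - 1)]
    rw [Real.exp_neg]
    rw [mul_inv_le_iff₀ (Real.exp_pos _), one_mul]
    exact hx2
  have hip : 0 < (Real.sqrt (2 * Real.pi))⁻¹ := by positivity
  have h3 : (Real.sqrt (2 * Real.pi))⁻¹ ≤ 1 := by rw [inv_le_one_iff₀]; right; exact h2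
  have he : 0 < Real.exp (-(x ^ 2 / 2)) := Real.exp_pos _
  nlinarith

lemma pdf_anti {a x : ℝ} (ha : 0 ≤ a) (hax : a ≤ x) :
    gaussianPDFReal 0 1 x ≤ gaussianPDFReal 0 1 a := by
  rw [pdf_eq, pdf_eq]
  have : Real.exp (-(x ^ 2 / 2)) ≤ Real.exp (-(a ^ 2 / 2)) := by
    apply Real.exp_le_exp.mpr; nlinarith
  have hip : 0 ≤ (Real.sqrt (2 * Real.pi))⁻¹ := by positivity
  nlinarith

lemma pdf_even (x : ℝ) : gaussianPDFReal 0 1 (-x) = gaussianPDFReal 0 1 x := by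
  rw [pdf_eq, pdf_eq]; ring_nf

lemma cdf_eq (z : ℝ) : stdNormalCDF z = ∫ x in Set.Iic z, gaussianPDFReal 0 1 x := by
  rw [stdNormalCDF, gaussianReal_apply_eq_integral 0 one_ne_zero,
    ENNReal.toReal_ofReal (setIntegral_nonneg measurableSet_Iic fun x _ => pdf_nonneg x)]

lemma cdf_diff {a b : ℝ} (hab : a ≤ b) :
    stdNormalCDF b - stdNormalCDF a = ∫ x in Set.Ioc a b, gaussianPDFReal 0 1 x := by
  rw [cdf_eq, cdf_eq, ← Set.Iic_union_Ioc_eq_Iic hab,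
    setIntegral_union (Set.Iic_disjoint_Ioc le_rfl) measurableSet_Ioc
      (integrable_gaussianPDFReal 0 1).integrableOn
      (integrable_gaussianPDFReal 0 1).integrableOn]
  ring

lemma cdf_incr_le {a b M : ℝ} (hab : a ≤ b) (hM : ∀ x ∈ Set.Ioc a b, gaussianPDFReal 0 1 x ≤ M) :
    stdNormalCDF b - stdNormalCDF a ≤ (b - a) * M := by
  rw [cdf_diff hab]
  calc ∫ x in Set.Ioc a b, gaussianPDFReal 0 1 x
      ≤ ∫ _x in Set.Ioc a b, M := by
        apply setIntegral_mono_on (integrable_gaussianPDFReal 0 1).integrableOn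
          (integrableOn_const measure_Ioc_lt_top.ne) measurableSet_Ioc hM
    _ = (b - a) * M := by
        rw [setIntegral_const, Real.volume_real_Ioc_of_le hab, smul_eq_mul]

lemma cdf_mono {a b : ℝ} (hab : a ≤ b) : stdNormalCDF a ≤ stdNormalCDF b := by
  have := cdf_diff hab
  have h0 : 0 ≤ ∫ x in Set.Ioc a b, gaussianPDFReal 0 1 x :=
    setIntegral_nonneg measurableSet_Ioc fun x _ => pdf_nonneg x
  linarith

lemma cdf_shift_mid_upper {z δC : ℝ} (hδC0 : 0 ≤ δC) (hδC1 : δC < 1) :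
    stdNormalCDF (z + |z| * δC) - stdNormalCDF z ≤ δC / (1 - δC) := by
  have h1C : (0:ℝ) < 1 - δC := by linarith
  rcases le_or_gt 0 z with hz | hz
  · rw [abs_of_nonneg hz]
    have : stdNormalCDF (z + z * δC) - stdNormalCDF z ≤ (z + z * δC - z) * gaussianPDFReal 0 1 z := by
      apply cdf_incr_le (by nlinarith)
      intro x hx
      exact pdf_anti hz hx.1.le
    have h2 : z * gaussianPDFReal 0 1 z ≤ 1 := mul_pdf_le_one hz
    have h3 : 0 ≤ gaussianPDFReal 0 1 z := pdf_nonneg z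
    have h4 : δC ≤ δC / (1 - δC) := by
      rw [le_div_iff₀ h1C]; nlinarith
    nlinarith
  · rw [abs_of_neg hz]
    set m := z + -z * δC with hm
    have hmz : z ≤ m := by nlinarith
    have hm0 : m ≤ 0 := by nlinarith
    have : stdNormalCDF m - stdNormalCDF z ≤ (m - z) * gaussianPDFReal 0 1 m := by
      apply cdf_incr_le hmz
      intro x hx
      rw [← pdf_even x, ← pdf_even m]
      exact pdf_anti (by linarith) (by linarith [hx.2])
    have h2 : (-m) * gaussianPDFReal 0 1 m ≤ 1 := by
      rw [← pdf_even m]; exact mul_pdf_le_one (by linarith)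
    have h3 : 0 ≤ gaussianPDFReal 0 1 m := pdf_nonneg m
    -- (m - z) = -z*δC ; goal: -z*δC * pdf m ≤ δC/(1-δC), i.e. -z*(1-δC)*pdf m ≤ 1... note -m = -z(1-δC)
    have h5 : (m - z) * gaussianPDFReal 0 1 m ≤ δC / (1 - δC) := by
      rw [le_div_iff₀ h1C]
      have hmm : -m = -z * (1 - δC) := by rw [hm]; ring
      nlinarith
    exact this.trans h5

lemma cdf_shift_mid_lower {z δC : ℝ} (hδC0 : 0 ≤ δC) (hδC1 : δC < 1) :
    stdNormalCDF z - stdNormalCDF (z - |z| * δC) ≤ δC / (1 - δC) := by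
  have h1C : (0:ℝ) < 1 - δC := by linarith
  rcases le_or_gt 0 z with hz | hz
  · rw [abs_of_nonneg hz]
    set m := z - z * δC with hm
    have hmz : m ≤ z := by nlinarith
    have hm0 : 0 ≤ m := by nlinarith
    have : stdNormalCDF z - stdNormalCDF m ≤ (z - m) * gaussianPDFReal 0 1 m := by
      apply cdf_incr_le hmz
      intro x hx
      exact pdf_anti hm0 hx.1.le
    have h2 : m * gaussianPDFReal 0 1 m ≤ 1 := mul_pdf_le_one hm0
    have h3 : 0 ≤ gaussianPDFReal 0 1 m := pdf_nonneg m
    have h5 : (z - m) * gaussianPDFReal 0 1 m ≤ δC / (1 - δC) := by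
      rw [le_div_iff₀ h1C]
      have hmm : m = z * (1 - δC) := by rw [hm]; ring
      nlinarith
    exact this.trans h5
  · rw [abs_of_neg hz]
    set m := z - -z * δC with hm
    have hmz : m ≤ z := by nlinarith
    have : stdNormalCDF z - stdNormalCDF m ≤ (z - m) * gaussianPDFReal 0 1 z := by
      apply cdf_incr_le hmz
      intro x hx
      rw [← pdf_even x, ← pdf_even z]
      exact pdf_anti (by linarith) (by linarith [hx.2])
    have h2 : (-z) * gaussianPDFReal 0 1 z ≤ 1 := by
      rw [← pdf_even z]; exact mul_pdf_le_one (by linarith)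
    have h3 : 0 ≤ gaussianPDFReal 0 1 z := pdf_nonneg z
    have h4 : δC ≤ δC / (1 - δC) := by rw [le_div_iff₀ h1C]; nlinarith
    have h5 : (z - m) = -z * δC := by rw [hm]; ring
    nlinarith

lemma cdf_shift_upper {z δB δC : ℝ} (hδB0 : 0 ≤ δB) (hδC0 : 0 ≤ δC) (hδC1 : δC < 1) :
    stdNormalCDF (z + |z| * δC + δB) - stdNormalCDF z ≤ δB + δC / (1 - δC) := by
  have hB : stdNormalCDF (z + |z| * δC + δB) - stdNormalCDF (z + |z| * δC) ≤ δB := by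
    have := cdf_incr_le (a := z + |z| * δC) (b := z + |z| * δC + δB) (by linarith)
      (fun x _ => pdf_le_one x)
    simpa using this
  have := cdf_shift_mid_upper (z := z) hδC0 hδC1
  linarith

lemma cdf_shift_lower {z δB δC : ℝ} (hδB0 : 0 ≤ δB) (hδC0 : 0 ≤ δC) (hδC1 : δC < 1) :
    stdNormalCDF z - stdNormalCDF (z - |z| * δC - δB) ≤ δB + δC / (1 - δC) := by
  have hB : stdNormalCDF (z - |z| * δC) - stdNormalCDF (z - |z| * δC - δB) ≤ δB := by
    have := cdf_incr_le (a := z - |z| * δC - δB) (b := z - |z| * δC) (by linarith)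
      (fun x _ => pdf_le_one x)
    simpa using this
  have := cdf_shift_mid_lower (z := z) hδC0 hδC1
  linarith

/-- Lemma D.3 of Barber & Kolar: if
`sup_z |P(A ≤ z) − Φ(z)| ≤ ε_A` and `P(|B| ≤ δ_B, |C| ≤ δ_C) ≥ 1 − ε_{BC}`
with `ε_A, ε_{BC}, δ_B, δ_C ∈ [0,1)`, then
`sup_z |P((A+B)/(1+C) ≤ z) − Φ(z)| ≤ δ_B + δ_C/(1−δ_C) + ε_A + ε_{BC}`. -/
theorem gaussian_approx_combination
    {Ω : Type*} [MeasurableSpace Ω] (μ : Measure Ω) [IsProbabilityMeasure μ]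
    (A B C : Ω → ℝ) (hA : Measurable A) (hB : Measurable B) (hC : Measurable C)
    (εA εBC δB δC : ℝ)
    (hεA0 : 0 ≤ εA) (hεA1 : εA < 1)
    (hεBC0 : 0 ≤ εBC) (hεBC1 : εBC < 1)
    (hδB0 : 0 ≤ δB) (hδB1 : δB < 1)
    (hδC0 : 0 ≤ δC) (hδC1 : δC < 1)
    (h1 : ∀ z : ℝ, |(μ {ω | A ω ≤ z}).toReal - stdNormalCDF z| ≤ εA)
    (h2 : 1 - εBC ≤ (μ {ω | |B ω| ≤ δB ∧ |C ω| ≤ δC}).toReal) :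
    ∀ z : ℝ, |(μ {ω | (A ω + B ω) / (1 + C ω) ≤ z}).toReal - stdNormalCDF z|
      ≤ δB + δC / (1 - δC) + εA + εBC := by
  intro z
  set E : Set Ω := {ω | |B ω| ≤ δB ∧ |C ω| ≤ δC} with hE
  have hEmeas : MeasurableSet E := by
    apply MeasurableSet.inter
    · exact measurableSet_le hB.abs measurable_const
    · exact measurableSet_le hC.abs measurable_const
  set S : Set Ω := {ω | (A ω + B ω) / (1 + C ω) ≤ z} with hS
  have hEc : (μ Eᶜ).toReal ≤ εBC := by
    rw [measure_compl hEmeas (measure_ne_top μ E), measure_univ,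
      ENNReal.toReal_sub_of_le prob_le_one ENNReal.one_ne_top]
    simp only [ENNReal.toReal_one]
    linarith
  set u := z + |z| * δC + δB with hu
  set l := z - |z| * δC - δB with hl
  -- pointwise facts on E
  have hposC : ∀ ω ∈ E, (0:ℝ) < 1 + C ω := by
    intro ω hω
    have := hω.2
    have := abs_le.mp this
    linarith [this.1]
  have hsub1 : S ⊆ {ω | A ω ≤ u} ∪ Eᶜ := by
    intro ω hω
    by_cases hωE : ω ∈ E
    · left
      have hc := hposC ω hωE
      have hBa := abs_le.mp hωE.1
      have hCa := abs_le.mp hωE.2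
      have hdiv : A ω + B ω ≤ z * (1 + C ω) := (div_le_iff₀ hc).mp hω
      have hzC : z * C ω ≤ |z| * δC := by
        calc z * C ω ≤ |z * C ω| := le_abs_self _
          _ = |z| * |C ω| := abs_mul _ _
          _ ≤ |z| * δC := by
            apply mul_le_mul_of_nonneg_left hωE.2 (abs_nonneg z)
      show A ω ≤ u
      rw [hu]
      nlinarith
    · right; exact hωE
  have hsub2 : {ω | A ω ≤ l} ⊆ S ∪ Eᶜ := by
    intro ω hω
    by_cases hωE : ω ∈ E
    · left
      have hc := hposC ω hωE
      have hBa := abs_le.mp hωE.1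
      have hCa := abs_le.mp hωE.2
      have hzC : -(|z| * δC) ≤ z * C ω := by
        have : |z * C ω| ≤ |z| * δC := by
          rw [abs_mul]
          exact mul_le_mul_of_nonneg_left hωE.2 (abs_nonneg z)
        linarith [(abs_le.mp this).1]
      have hAl : A ω ≤ l := hω
      show (A ω + B ω) / (1 + C ω) ≤ z
      rw [div_le_iff₀ hc]
      rw [hl] at hAl
      nlinarith
    · right; exact hωE
  have toReal_union : ∀ (X Y : Set Ω), (μ (X ∪ Y)).toReal ≤ (μ X).toReal + (μ Y).toReal := by
    intro X Y
    rw [← ENNReal.toReal_add (measure_ne_top μ X) (measure_ne_top μ Y)]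
    exact ENNReal.toReal_mono (by finiteness) (measure_union_le X Y)
  have hupper : (μ S).toReal ≤ (μ {ω | A ω ≤ u}).toReal + εBC := by
    have h := (ENNReal.toReal_mono (by finiteness) (measure_mono hsub1)).trans
      (toReal_union _ _)
    linarith
  have hlower : (μ {ω | A ω ≤ l}).toReal - εBC ≤ (μ S).toReal := by
    have h := (ENNReal.toReal_mono (by finiteness) (measure_mono hsub2)).trans
      (toReal_union _ _)
    linarith
  have hAu := abs_le.mp (h1 u)
  have hAl := abs_le.mp (h1 l)
  have hΦu : stdNormalCDF u - stdNormalCDF z ≤ δB + δC / (1 - δC) := by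
    have := cdf_shift_upper (z := z) hδB0 hδC0 hδC1
    simpa [hu] using this
  have hΦl : stdNormalCDF z - stdNormalCDF l ≤ δB + δC / (1 - δC) := by
    have := cdf_shift_lower (z := z) hδB0 hδC0 hδC1
    simpa [hl] using this
  rw [abs_le]
  constructor
  · linarith
  · linarith
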